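/- Let H be a block upper bidiagonal matrix with blocks H₁₁ (upper-left, p×p), H₁₂ (upper-right), H₂₂ (lower-right), and zero lower-left block, where H₁₁ is nilpotent with H₁₁^p = 0. Then the upper-right block of e^{Hx} equals Σ_{k=0}^{p−1} H₁₁^k H₁₂ H₂₂^{−(k+1)} (e^{xH₂₂} − I − H₂₂x − ⋯ − (H₂₂x)^k/k!), provided H₂₂ is invertible. -/

import Mathlib

open Matrix NormedSpace
open scoped Nat

theorem pow_blockTriangular' {p q : ℕ} (A : Matrix (Fin p) (Fin p) ℝ) (B : Matrix (Fin p) (Fin q) ℝ)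
    (C : Matrix (Fin q) (Fin q) ℝ) (n : ℕ) :
    (fromBlocks A B 0 C) ^ n =
      fromBlocks (A ^ n) (∑ k ∈ Finset.range n, A ^ k * B * C ^ (n - 1 - k)) 0 (C ^ n) := by
  induction n with
  | zero => simp [fromBlocks_one]
  | succ n ih =>
    have h12 : A * (∑ k ∈ Finset.range n, A ^ k * B * C ^ (n - 1 - k)) + B * C ^ n
        = ∑ k ∈ Finset.range (n + 1), A ^ k * B * C ^ (n + 1 - 1 - k) := by
      rw [Finset.sum_range_succ']
      simp only [pow_zero, one_mul, Nat.sub_zero]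
      rw [Matrix.mul_sum]
      congr 1
      · refine Finset.sum_congr rfl fun k hk => ?_
        rw [Finset.mem_range] at hk
        rw [← Matrix.mul_assoc, ← Matrix.mul_assoc, ← pow_succ']
        congr 2
        omega
      · simp
    rw [pow_succ', ih, fromBlocks_multiply, ← pow_succ' A, ← pow_succ' C]
    rw [h12]
    simp [Matrix.mul_zero, Matrix.zero_mul]

theorem tsum_matmul_left {p' q' r' : ℕ} (L : Matrix (Fin p') (Fin q') ℝ)
    {f : ℕ → Matrix (Fin q') (Fin r') ℝ} (hf : Summable f) :
    Summable (fun n => L * f n) ∧ (∑' n, L * f n) = L * ∑' n, f n := by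
  let M : Matrix (Fin q') (Fin r') ℝ →L[ℝ] Matrix (Fin p') (Fin r') ℝ :=
    { toFun := fun N => L * N,
      map_add' := fun a b => Matrix.mul_add L a b,
      map_smul' := fun c a => Matrix.mul_smul L c a,
      cont := continuous_const.matrix_mul continuous_id }
  exact ⟨hf.map M M.continuous, (M.map_tsum hf).symm⟩

/-- For a block upper bidiagonal `H = [[H₁₁, H₁₂], [0, H₂₂]]` with `H₁₁^p = 0` and `H₂₂`
invertible, the upper-right block of `e^{Hx}` is
`Σ_{k<p} H₁₁^k H₁₂ H₂₂^{-(k+1)} (e^{x H₂₂} - Σ_{j≤k} (x H₂₂)^j / j!)`. -/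
theorem stmt17 (p q : ℕ) (H11 : Matrix (Fin p) (Fin p) ℝ) (H12 : Matrix (Fin p) (Fin q) ℝ)
    (H22 : Matrix (Fin q) (Fin q) ℝ) (hnil : H11 ^ p = 0) (hinv : IsUnit H22.det)
    (H : Matrix (Fin p ⊕ Fin q) (Fin p ⊕ Fin q) ℝ)
    (hH : H = Matrix.fromBlocks H11 H12 0 H22) :
    ∀ x : ℝ, (NormedSpace.exp (x • H)).toBlocks₁₂ =
      ∑ k ∈ Finset.range p, H11 ^ k * H12 * H22⁻¹ ^ (k + 1) *
        (NormedSpace.exp (x • H22) -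
          ∑ j ∈ Finset.range (k + 1), (x ^ j / (Nat.factorial j : ℝ)) • H22 ^ j) := by
  intro x
  subst hH
  letI : SeminormedRing (Matrix (Fin p ⊕ Fin q) (Fin p ⊕ Fin q) ℝ) := Matrix.linftyOpSemiNormedRing
  letI : NormedRing (Matrix (Fin p ⊕ Fin q) (Fin p ⊕ Fin q) ℝ) := Matrix.linftyOpNormedRing
  letI : NormedAlgebra ℝ (Matrix (Fin p ⊕ Fin q) (Fin p ⊕ Fin q) ℝ) := Matrix.linftyOpNormedAlgebra
  letI : SeminormedRing (Matrix (Fin q) (Fin q) ℝ) := Matrix.linftyOpSemiNormedRing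
  letI : NormedRing (Matrix (Fin q) (Fin q) ℝ) := Matrix.linftyOpNormedRing
  letI : NormedAlgebra ℝ (Matrix (Fin q) (Fin q) ℝ) := Matrix.linftyOpNormedAlgebra
  -- scalar helper
  have hsc : ∀ n : ℕ, ((n ! : ℝ))⁻¹ * x ^ n = x ^ n / (n ! : ℝ) := fun n => by
    rw [div_eq_mul_inv, mul_comm]
  -- summability of the H22 exponential series
  have hg : Summable (fun n : ℕ => (x ^ n / (n ! : ℝ)) • H22 ^ n) := by
    have h := expSeries_summable' (𝕂 := ℝ) (x • H22)
    convert h using 2 with n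
    · rfl
    · rfl
    rw [smul_pow, smul_smul, hsc]
  have hexp22 : exp (x • H22) = ∑' n : ℕ, (x ^ n / (n ! : ℝ)) • H22 ^ n := by
    rw [exp_eq_tsum (𝕂 := ℝ)]
    refine tsum_congr fun n => ?_
    rw [smul_pow, smul_smul, hsc]
  -- inverse powers
  have hcomm : Commute H22⁻¹ H22 := by
    unfold Commute SemiconjBy
    rw [Matrix.nonsing_inv_mul _ hinv, Matrix.mul_nonsing_inv _ hinv]
  have hinvpow : ∀ m : ℕ, H22⁻¹ ^ m * H22 ^ m = 1 := fun m => by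
    rw [← hcomm.mul_pow, Matrix.nonsing_inv_mul _ hinv, one_pow]
  -- vanishing of high powers of H11
  have h0 : ∀ k, p ≤ k → H11 ^ k = 0 := fun k hk => by
    rw [← Nat.add_sub_cancel' hk, pow_add, hnil, Matrix.zero_mul]
  -- truncate the block sum at p
  have hS : ∀ n : ℕ, (∑ k ∈ Finset.range n, H11 ^ k * H12 * H22 ^ (n - 1 - k))
      = ∑ k ∈ Finset.range p, (if k + 1 ≤ n then H11 ^ k * H12 * H22 ^ (n - 1 - k) else 0) := by
    intro n
    rcases le_total n p with h | h
    · have e1 : ∑ k ∈ Finset.range n, H11 ^ k * H12 * H22 ^ (n - 1 - k)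
          = ∑ k ∈ Finset.range n, (if k + 1 ≤ n then H11 ^ k * H12 * H22 ^ (n - 1 - k) else 0) :=
        Finset.sum_congr rfl fun k hk => (if_pos (Finset.mem_range.mp hk)).symm
      rw [e1]
      exact Finset.sum_subset (Finset.range_subset_range.mpr h) (fun k _ hk => if_neg (by
        rw [Finset.mem_range] at hk; omega))
    · have e2 : ∑ k ∈ Finset.range p, (if k + 1 ≤ n then H11 ^ k * H12 * H22 ^ (n - 1 - k) else 0)
          = ∑ k ∈ Finset.range p, H11 ^ k * H12 * H22 ^ (n - 1 - k) :=
        Finset.sum_congr rfl fun k hk => if_pos (by rw [Finset.mem_range] at hk; omega)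
      rw [e2]
      exact (Finset.sum_subset (Finset.range_subset_range.mpr h) (fun k _ hk => by
        rw [Finset.mem_range, not_lt] at hk
        rw [h0 k hk, Matrix.zero_mul, Matrix.zero_mul])).symm
  -- the continuous linear map extracting the upper-right block
  let T : Matrix (Fin p ⊕ Fin q) (Fin p ⊕ Fin q) ℝ →L[ℝ] Matrix (Fin p) (Fin q) ℝ :=
    { toFun := toBlocks₁₂,
      map_add' := fun _ _ => rfl,
      map_smul' := fun _ _ => rfl,
      cont := continuous_id.matrix_submatrix Sum.inl Sum.inr }
  have hsum : Summable (fun n : ℕ => ((n ! : ℝ))⁻¹ • (x • fromBlocks H11 H12 0 H22) ^ n) :=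
    expSeries_summable' (𝕂 := ℝ) _
  have L1 : (exp (x • fromBlocks H11 H12 0 H22)).toBlocks₁₂
      = ∑' n : ℕ, (x ^ n / (n ! : ℝ)) •
          (∑ k ∈ Finset.range n, H11 ^ k * H12 * H22 ^ (n - 1 - k)) := by
    rw [exp_eq_tsum (𝕂 := ℝ)]
    have e : (∑' n : ℕ, ((n ! : ℝ))⁻¹ • (x • fromBlocks H11 H12 0 H22) ^ n).toBlocks₁₂
        = T (∑' n : ℕ, ((n ! : ℝ))⁻¹ • (x • fromBlocks H11 H12 0 H22) ^ n) := rfl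
    rw [e, T.map_tsum hsum]
    refine tsum_congr fun n => ?_
    show (((n ! : ℝ))⁻¹ • (x • fromBlocks H11 H12 0 H22) ^ n).toBlocks₁₂ = _
    rw [smul_pow, smul_smul, hsc, pow_blockTriangular']
    rw [show (x ^ n / (n ! : ℝ)) • fromBlocks (H11 ^ n)
        (∑ k ∈ Finset.range n, H11 ^ k * H12 * H22 ^ (n - 1 - k)) 0 (H22 ^ n)
      = fromBlocks ((x ^ n / (n ! : ℝ)) • H11 ^ n)
        ((x ^ n / (n ! : ℝ)) • ∑ k ∈ Finset.range n, H11 ^ k * H12 * H22 ^ (n - 1 - k))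
        ((x ^ n / (n ! : ℝ)) • (0 : Matrix (Fin q) (Fin p) ℝ))
        ((x ^ n / (n ! : ℝ)) • H22 ^ n) from Matrix.fromBlocks_smul _ _ _ _ _]
    rw [Matrix.toBlocks_fromBlocks₁₂]
  -- rewrite each term as a product with the fixed left factor
  have hrows : ∀ n : ℕ, (x ^ n / (n ! : ℝ)) •
        (∑ k ∈ Finset.range n, H11 ^ k * H12 * H22 ^ (n - 1 - k))
      = ∑ k ∈ Finset.range p, H11 ^ k * H12 * H22⁻¹ ^ (k + 1) *
          (if k + 1 ≤ n then (x ^ n / (n ! : ℝ)) • H22 ^ n else 0) := by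
    intro n
    rw [hS n, Finset.smul_sum]
    refine Finset.sum_congr rfl fun k _ => ?_
    by_cases h : k + 1 ≤ n
    · rw [if_pos h, if_pos h, Matrix.mul_smul]
      congr 1
      have hpow : H22⁻¹ ^ (k + 1) * H22 ^ n = H22 ^ (n - 1 - k) := by
        conv_lhs => rw [show n = (k + 1) + (n - 1 - k) by omega]
        rw [pow_add H22, ← Matrix.mul_assoc, hinvpow, Matrix.one_mul]
      rw [Matrix.mul_assoc (H11 ^ k * H12) (H22⁻¹ ^ (k + 1)) (H22 ^ n), hpow]
    · rw [if_neg h, if_neg h, smul_zero, Matrix.mul_zero]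
  -- summability of the truncated series
  have hd : ∀ k : ℕ, Summable (fun n : ℕ =>
      if k + 1 ≤ n then (x ^ n / (n ! : ℝ)) • H22 ^ n else 0) := by
    intro k
    have h2 : Summable (fun n : ℕ =>
        if k + 1 ≤ n then (0 : Matrix (Fin q) (Fin q) ℝ) else (x ^ n / (n ! : ℝ)) • H22 ^ n) :=
      summable_of_ne_finset_zero (s := Finset.range (k + 1)) (fun n hn => by
        rw [Finset.mem_range, not_lt] at hn
        rw [if_pos hn])
    have h3 := hg.sub h2
    convert h3 using 1
    · rfl
    funext n
    by_cases h : k + 1 ≤ n <;> simp [h]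
  have htsum_d : ∀ k : ℕ,
      (∑' n : ℕ, (if k + 1 ≤ n then (x ^ n / (n ! : ℝ)) • H22 ^ n else 0))
      = exp (x • H22) - ∑ j ∈ Finset.range (k + 1), (x ^ j / (j ! : ℝ)) • H22 ^ j := by
    intro k
    have h2 : Summable (fun n : ℕ =>
        if k + 1 ≤ n then (0 : Matrix (Fin q) (Fin q) ℝ) else (x ^ n / (n ! : ℝ)) • H22 ^ n) :=
      summable_of_ne_finset_zero (s := Finset.range (k + 1)) (fun n hn => by
        rw [Finset.mem_range, not_lt] at hn
        rw [if_pos hn])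
    have e : (fun n : ℕ => if k + 1 ≤ n then (x ^ n / (n ! : ℝ)) • H22 ^ n else 0)
        = fun n : ℕ => (x ^ n / (n ! : ℝ)) • H22 ^ n -
            (if k + 1 ≤ n then (0 : Matrix (Fin q) (Fin q) ℝ)
              else (x ^ n / (n ! : ℝ)) • H22 ^ n) := by
      funext n
      by_cases h : k + 1 ≤ n <;> simp [h]
    rw [e, Summable.tsum_sub hg h2, hexp22]
    congr 1
    rw [tsum_eq_sum (s := Finset.range (k + 1)) (fun n hn => by
      rw [Finset.mem_range, not_lt] at hn
      rw [if_pos hn])]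
    exact Finset.sum_congr rfl fun j hj => if_neg (by rw [Finset.mem_range] at hj; omega)
  rw [L1, tsum_congr hrows]
  have hmul := fun k : ℕ => tsum_matmul_left (H11 ^ k * H12 * H22⁻¹ ^ (k + 1)) (hd k)
  have hswap := Summable.tsum_finsetSum (s := Finset.range p)
    (f := fun (k : ℕ) (n : ℕ) => H11 ^ k * H12 * H22⁻¹ ^ (k + 1) *
      (if k + 1 ≤ n then (x ^ n / (n ! : ℝ)) • H22 ^ n else 0))
    (fun k _ => by simpa using (hmul k).1)
  rw [hswap]
  refine Finset.sum_congr rfl fun k _ => ?_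
  exact ((hmul k).2).trans (by rw [htsum_d k])
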